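/- Let F : C → D be a lax monoidal functor between monoidal categories. Then F admits a right adjoint in the 2-category MonCat of monoidal categories, lax monoidal functors, and monoidal natural transformations if and only if F has a right adjoint G in Cat and F is strong monoidal. In that case there is a unique lax monoidal structure on G making the unit and counit of the adjunction into monoidal natural transformations. -/

import Mathlib

open CategoryTheory Functor.LaxMonoidal

universe v₁ v₂ u₁ u₂

section Aux

variable {C : Type u₁} {D : Type u₂} [Category.{v₁} C] [Category.{v₂} D]
    [MonoidalCategory C] [MonoidalCategory D]

open MonoidalCategory Category

/-- Two lax monoidal structures with the same `ε` and `μ` agree. -/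
lemma laxMonoidal_ext' {F : C ⥤ D} (l₁ l₂ : F.LaxMonoidal)
    (hε : @ε _ _ _ _ _ _ F l₁ = @ε _ _ _ _ _ _ F l₂)
    (hμ : ∀ X Y, @μ _ _ _ _ _ _ F l₁ X Y = @μ _ _ _ _ _ _ F l₂ X Y) : l₁ = l₂ := by
  cases l₁; cases l₂
  simp only [ε, μ] at hε hμ
  congr 1
  funext X Y
  exact hμ X Y

lemma strong_of_monoidal_adj {F : C ⥤ D} [F.LaxMonoidal] {G : D ⥤ C} [G.LaxMonoidal]
    (adj : F ⊣ G) (hu : NatTrans.IsMonoidal adj.unit) (hc : NatTrans.IsMonoidal adj.counit) :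
    IsIso (ε F) ∧ ∀ X Y : C, IsIso (μ F X Y) := by
  constructor
  · refine ⟨F.map (ε G) ≫ adj.counit.app (𝟙_ D), ?_, ?_⟩
    · have := hc.unit
      simp only [comp_ε, id_ε, Functor.id_obj] at this
      simpa [Category.assoc] using this
    · have nat := adj.counit.naturality (ε F)
      have hu' : ε G ≫ G.map (ε F) = adj.unit.app (𝟙_ C) := by
        have := hu.unit
        simp only [comp_ε, id_ε, Functor.id_obj, Category.id_comp] at this
        exact this.symm
      simp only [Functor.comp_obj, Functor.id_obj, Functor.comp_map, Functor.id_map] at nat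
      rw [Category.assoc, ← nat, ← Category.assoc, ← F.map_comp, hu',
        adj.left_triangle_components]
  · intro X Y
    refine ⟨F.map ((adj.unit.app X ⊗ₘ adj.unit.app Y) ≫ μ G (F.obj X) (F.obj Y)) ≫
      adj.counit.app (F.obj X ⊗ F.obj Y), ?_, ?_⟩
    · have ht := hc.tensor (F.obj X) (F.obj Y)
      simp only [comp_μ, id_μ, Functor.id_obj, Category.comp_id] at ht
      rw [F.map_comp, ← Category.assoc, ← Category.assoc]
      rw [show μ F X Y ≫ F.map (adj.unit.app X ⊗ₘ adj.unit.app Y)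
          = (F.map (adj.unit.app X) ⊗ₘ F.map (adj.unit.app Y)) ≫ μ F _ _ from
        (μ_natural F _ _).symm]
      simp only [Functor.comp_obj, Category.assoc] at ht ⊢
      rw [ht, tensorHom_comp_tensorHom]
      simp
    · have nat := adj.counit.naturality (μ F X Y)
      simp only [Functor.comp_obj, Functor.id_obj, Functor.comp_map, Functor.id_map] at nat
      have hu' : (adj.unit.app X ⊗ₘ adj.unit.app Y) ≫ μ G (F.obj X) (F.obj Y) ≫
          G.map (μ F X Y) = adj.unit.app (X ⊗ Y) := by
        have := hu.tensor X Y
        simp only [comp_μ, id_μ, Functor.id_obj, Category.id_comp,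
          Functor.comp_obj] at this
        exact this.symm
      rw [Category.assoc, ← nat, ← Category.assoc, ← F.map_comp]
      simp only [Category.assoc]
      rw [hu', adj.left_triangle_components]

end Aux

/-- A lax monoidal functor `F` admits a right adjoint in `MonCat` (i.e. a right adjoint
carrying a lax monoidal structure making the unit and counit of the adjunction monoidal)
iff `F` has a right adjoint in `Cat` and `F` is strong monoidal; and in that case, for any
right adjoint `G` of `F`, there is a unique lax monoidal structure on `G` making the unit
and counit monoidal. -/
theorem laxMonoidal_left_adjoint_iff_strong
    {C : Type u₁} {D : Type u₂} [Category.{v₁} C] [Category.{v₂} D]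
    [MonoidalCategory C] [MonoidalCategory D]
    (F : C ⥤ D) [F.LaxMonoidal] :
    ((∃ (G : D ⥤ C) (_ : G.LaxMonoidal) (adj : F ⊣ G),
        NatTrans.IsMonoidal adj.unit ∧ NatTrans.IsMonoidal adj.counit) ↔
      (F.IsLeftAdjoint ∧ IsIso (ε F) ∧ ∀ X Y : C, IsIso (μ F X Y))) ∧
    (∀ (G : D ⥤ C) (adj : F ⊣ G), IsIso (ε F) → (∀ X Y : C, IsIso (μ F X Y)) →
      ∃! gl : G.LaxMonoidal,
        letI := gl
        NatTrans.IsMonoidal adj.unit ∧ NatTrans.IsMonoidal adj.counit) := by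
  have part2 : ∀ (G : D ⥤ C) (adj : F ⊣ G), IsIso (ε F) → (∀ X Y : C, IsIso (μ F X Y)) →
      ∃! gl : G.LaxMonoidal,
        letI := gl
        NatTrans.IsMonoidal adj.unit ∧ NatTrans.IsMonoidal adj.counit := by
    intro G adj hε hμ
    haveI := hε; haveI := hμ
    letI : F.Monoidal := Functor.Monoidal.ofLaxMonoidal F
    have hm : letI := adj.rightAdjointLaxMonoidal
        NatTrans.IsMonoidal adj.unit ∧ NatTrans.IsMonoidal adj.counit := by
      letI := adj.rightAdjointLaxMonoidal
      haveI : adj.IsMonoidal := inferInstance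
      have h1 : NatTrans.IsMonoidal adj.unit := Adjunction.IsMonoidal.instIsMonoidalUnit adj
      have h2 : NatTrans.IsMonoidal adj.counit := Adjunction.IsMonoidal.instIsMonoidalCounit adj
      exact ⟨h1, h2⟩
    refine ⟨adj.rightAdjointLaxMonoidal, hm, ?_⟩
    intro gl ⟨h1, h2⟩
    refine laxMonoidal_ext' gl adj.rightAdjointLaxMonoidal ?_ ?_
    · rw [adj.rightAdjointLaxMonoidal_ε]
      apply (adj.homEquiv _ _).symm.injective
      rw [Equiv.symm_apply_apply, Adjunction.homEquiv_counit]
      have := h2.unit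
      simp only [comp_ε, id_ε, Functor.id_obj, Category.assoc] at this
      have hη : Functor.OplaxMonoidal.η F = CategoryTheory.inv (ε F) := rfl
      rw [hη]
      exact (IsIso.inv_eq_of_hom_inv_id this).symm
    · intro X Y
      rw [adj.rightAdjointLaxMonoidal_μ]
      apply (adj.homEquiv _ _).symm.injective
      rw [Equiv.symm_apply_apply, Adjunction.homEquiv_counit]
      have := h2.tensor X Y
      simp only [comp_μ, id_μ, Functor.id_obj, Category.comp_id, Category.assoc,
        Functor.comp_obj] at this
      have hδ : Functor.OplaxMonoidal.δ F (G.obj X) (G.obj Y)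
          = CategoryTheory.inv (μ F (G.obj X) (G.obj Y)) := rfl
      rw [hδ]
      rw [IsIso.eq_inv_comp]
      exact this
  refine ⟨⟨?_, ?_⟩, part2⟩
  · rintro ⟨G, gl, adj, hu, hc⟩
    exact ⟨⟨G, ⟨adj⟩⟩, strong_of_monoidal_adj adj hu hc⟩
  · rintro ⟨⟨G, ⟨adj⟩⟩, hε, hμ⟩
    obtain ⟨gl, ⟨h1, h2⟩, -⟩ := part2 G adj hε hμ
    exact ⟨G, gl, adj, h1, h2⟩
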